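/- Let (u_n)_{n≥1} be any sequence listing every nonzero ZF-word exactly once (up to leading 0s) which is length-increasing, meaning that the length of u_n after stripping leading 0s (equivalently, the position of its leftmost digit 1) is nondecreasing in n. Then for every n ≥ 1, h(u_n, u_{n+1}) ≥ h(g_n, g_{n+1}). -/

import Mathlib

/-- A ZF-word: a binary word (leftmost digit at the head of the list) with no two
consecutive digits `1`. -/
def ZFword (w : List Bool) : Prop :=
  w.Chain' fun a b => ¬(a = true ∧ b = true)

/-- The lists `N_n` of binary words: `N_0 = ()`, `N_1 = (1)` and, for `n ≥ 2`,
`N_n = 10·rev(N_{n-1}') ++ 10·rev(N_{n-2})`, where `L'` removes the leftmost letter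
of each word of `L`, `rev` reverses the order of the list and `10·L` prefixes `10`
to each word of `L`. -/
def Nlist : ℕ → List (List Bool)
  | 0 => []
  | 1 => [[true]]
  | (n + 2) =>
      ((Nlist (n + 1)).map List.tail).reverse.map (fun w => true :: false :: w) ++
        (Nlist n).reverse.map (fun w => true :: false :: w)

/-- The `i`-th term `g_i` (for `i ≥ 1`) of the infinite list
`G = N_1 ++ N_2 ++ N_3 ++ ⋯`; the block `N_n` occupies the (1-indexed) positions
`F (n+1), …, F (n+2) - 1` of `G`. -/
def Gword (i : ℕ) : List Bool :=
  (((List.range (i + 2)).map Nlist).flatten).getD (i - 1) []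

/-- The Hamming distance of two binary words (leftmost digit at the head), the shorter
word being padded with leading `0`s: the number of positions (counted from the right)
at which the two words differ. -/
def hammingWords (w w' : List Bool) : ℕ :=
  ((Finset.range (max w.length w'.length)).filter
    (fun i => w.reverse.getD i false ≠ w'.reverse.getD i false)).card


namespace GrayAux


/-- The `i`-th bit (from the right, 0-indexed) of a word, with implicit 0-padding. -/
def bit (w : List Bool) (i : ℕ) : Bool := w.reverse.getD i false

lemma bit_of_le {w : List Bool} {i : ℕ} (h : w.length ≤ i) : bit w i = false := by
  unfold bit
  exact List.getD_eq_default _ _ (by simpa using h)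

lemma bit_cons (a : Bool) (w : List Bool) (i : ℕ) :
    bit (a :: w) i = if i = w.length then a else bit w i := by
  unfold bit
  rw [List.reverse_cons]
  rcases lt_trichotomy i w.length with h | h | h
  · rw [List.getD_append _ _ _ _ (by simpa using h), if_neg h.ne]
  · subst h
    rw [List.getD_append_right _ _ _ _ (by simp), if_pos rfl]
    simp
  · rw [if_neg h.ne', List.getD_eq_default _ _ (by simp; omega),
      List.getD_eq_default _ _ (by simpa using h.le)]

lemma hammingWords_eq_card {w w' : List Bool} {M : ℕ} (h : max w.length w'.length ≤ M) :
    hammingWords w w' = ((Finset.range M).filter (fun i => bit w i ≠ bit w' i)).card := by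
  unfold hammingWords
  congr 1
  apply Finset.ext
  intro i
  simp only [Finset.mem_filter, Finset.mem_range]
  constructor
  · rintro ⟨hi, hd⟩; exact ⟨lt_of_lt_of_le hi h, hd⟩
  · rintro ⟨hi, hd⟩
    refine ⟨?_, hd⟩
    by_contra hc
    push_neg at hc
    have h1 : bit w i = false := bit_of_le (le_trans (le_max_left _ _) hc)
    have h2 : bit w' i = false := bit_of_le (le_trans (le_max_right _ _) hc)
    exact hd (h1.trans h2.symm)

lemma bit_lt_of_ne {w w' : List Bool} {i : ℕ} (h : bit w i ≠ bit w' i) :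
    i < max w.length w'.length := by
  by_contra hc
  push_neg at hc
  exact h ((bit_of_le (le_trans (le_max_left _ _) hc)).trans
    (bit_of_le (le_trans (le_max_right _ _) hc)).symm)

lemma one_le_hammingWords {w w' : List Bool} {i : ℕ} (h : bit w i ≠ bit w' i) :
    1 ≤ hammingWords w w' := by
  rw [hammingWords_eq_card (le_refl _)]
  refine Finset.card_pos.2 ⟨i, ?_⟩
  simp only [Finset.mem_filter, Finset.mem_range]
  exact ⟨bit_lt_of_ne h, h⟩

lemma two_le_hammingWords {w w' : List Bool} {i j : ℕ} (hij : i ≠ j)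
    (hi : bit w i ≠ bit w' i) (hj : bit w j ≠ bit w' j) :
    2 ≤ hammingWords w w' := by
  rw [hammingWords_eq_card (le_refl _)]
  have : ({i, j} : Finset ℕ) ⊆ (Finset.range (max w.length w'.length)).filter
      (fun k => bit w k ≠ bit w' k) := by
    intro k hk
    simp only [Finset.mem_insert, Finset.mem_singleton] at hk
    rcases hk with rfl | rfl <;>
      simp only [Finset.mem_filter, Finset.mem_range] <;>
      exact ⟨bit_lt_of_ne ‹_›, ‹_›⟩
  calc 2 = ({i, j} : Finset ℕ).card := by rw [Finset.card_insert_of_notMem (by simpa using hij)]; simp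
  _ ≤ _ := Finset.card_le_card this

lemma hammingWords_comm (w w' : List Bool) : hammingWords w w' = hammingWords w' w := by
  unfold hammingWords
  rw [max_comm]
  congr 1
  apply Finset.filter_congr
  intro i _
  simp [ne_comm]

lemma hammingWords_self (w : List Bool) : hammingWords w w = 0 := by
  simp [hammingWords]

lemma hammingWords_cons_cons {w w' : List Bool} (h : w.length = w'.length) (a b : Bool) :
    hammingWords (a :: w) (b :: w') = (if a = b then 0 else 1) + hammingWords w w' := by
  have hM : max (a :: w).length (b :: w').length = w.length + 1 := by simp [h]
  rw [hammingWords_eq_card (le_of_eq hM),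
    hammingWords_eq_card (M := w.length) (le_of_eq (by simp [h]))]
  rw [Finset.range_add_one, Finset.filter_insert]
  have hfc : (Finset.range w.length).filter (fun i => bit (a :: w) i ≠ bit (b :: w') i)
      = (Finset.range w.length).filter (fun i => bit w i ≠ bit w' i) := by
    apply Finset.filter_congr
    intro i hi
    simp only [Finset.mem_range] at hi
    rw [bit_cons, bit_cons, if_neg hi.ne, if_neg (h ▸ hi).ne]
  have hbit : (bit (a :: w) w.length ≠ bit (b :: w') w.length) ↔ ¬(a = b) := by
    rw [bit_cons, bit_cons, if_pos rfl, if_pos h]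
  by_cases hab : a = b
  · rw [if_pos hab, if_neg (by rw [hbit]; simpa using hab), hfc, zero_add]
  · rw [if_neg hab, if_pos (hbit.2 hab), hfc,
      Finset.card_insert_of_notMem (by simp), add_comm]

/-- Extensionality from bits for equal-length words. -/
lemma eq_of_bit_eq {w w' : List Bool} (hl : w.length = w'.length)
    (h : ∀ i, i < w.length → bit w i = bit w' i) : w = w' := by
  have : w.reverse = w'.reverse := by
    apply List.ext_getElem (by simp [hl])
    intro i h1 h2
    have := h i (by simpa using h1)
    unfold bit at this
    rwa [List.getD_eq_getElem _ _ h1, List.getD_eq_getElem _ _ h2] at this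
  simpa using congrArg List.reverse this

/-- Stripping leading `false`s does not change the bit function. -/
lemma bit_dropWhile (w : List Bool) (i : ℕ) :
    bit (w.dropWhile (fun b => !b)) i = bit w i := by
  conv_rhs => rw [← List.takeWhile_append_dropWhile (p := fun b => !b) (l := w)]
  unfold bit
  rw [List.reverse_append]
  rcases lt_or_ge i (w.dropWhile (fun b => !b)).reverse.length with h | h
  · rw [List.getD_append _ _ _ _ h]
  · rw [List.getD_append_right _ _ _ _ h, List.getD_eq_default _ _ (by simpa using h)]
    rcases lt_or_ge (i - (w.dropWhile (fun b => !b)).reverse.length)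
        (w.takeWhile (fun b => !b)).reverse.length with h2 | h2
    · rw [List.getD_eq_getElem _ _ h2]
      have hmem : (w.takeWhile (fun b => !b)).reverse[i - (w.dropWhile (fun b => !b)).reverse.length] ∈
          (w.takeWhile (fun b => !b)).reverse := List.getElem_mem _
      rw [List.mem_reverse] at hmem
      have hp := List.mem_takeWhile_imp hmem
      simp only [Bool.not_eq_true'] at hp
      exact hp.symm
    · rw [List.getD_eq_default _ _ h2]



lemma ZF_cons_cons {b : Bool} {l : List Bool} :
    ZFword (true :: b :: l) ↔ b = false ∧ ZFword (b :: l) := by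
  rw [ZFword, List.Chain', List.isChain_cons_cons, ZFword]
  constructor
  · rintro ⟨h1, h2⟩
    refine ⟨?_, h2⟩
    cases b
    · rfl
    · exact absurd ⟨rfl, rfl⟩ h1
  · rintro ⟨rfl, h2⟩
    exact ⟨by simp, h2⟩

lemma head_eq_true {w : List Bool} (h : w.head? = some true) : w = true :: w.tail := by
  cases w with
  | nil => simp at h
  | cons a t => simp at h; rw [h]; rfl

lemma mem_Nlist : ∀ n, ∀ w : List Bool,
    w ∈ Nlist n ↔ ZFword w ∧ w.length = n ∧ w.head? = some true := by
  intro n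
  induction n using Nat.strong_induction_on with
  | _ n IH =>
    match n with
    | 0 =>
      intro w
      simp only [Nlist, List.not_mem_nil, false_iff]
      rintro ⟨h1, h2, h3⟩
      rw [List.length_eq_zero_iff] at h2
      subst h2
      simp at h3
    | 1 =>
      intro w
      simp only [Nlist, List.mem_singleton]
      constructor
      · rintro rfl; exact ⟨List.isChain_singleton _, rfl, rfl⟩
      · rintro ⟨h1, h2, h3⟩
        rw [head_eq_true h3]
        have : w.tail.length = 0 := by simp [List.length_tail, h2]
        rw [List.length_eq_zero_iff] at this
        rw [this]
    | (n + 2) =>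
      intro w
      have IH1 := IH (n + 1) (by omega)
      have IH0 := IH n (by omega)
      simp only [Nlist, List.mem_append, List.mem_map, List.mem_reverse]
      constructor
      · rintro (⟨x, hx, rfl⟩ | ⟨v, hv, rfl⟩)
        · obtain ⟨y, hy, rfl⟩ := hx
          obtain ⟨hZ, hL, hH⟩ := (IH1 y).1 hy
          have hy' := head_eq_true hH
          refine ⟨?_, by simp [List.length_tail, hL], rfl⟩
          rw [ZF_cons_cons]
          refine ⟨rfl, ?_⟩
          rw [ZFword, List.Chain', List.isChain_cons]
          constructor
          · intro z hz
            rintro ⟨h1, _⟩; exact absurd h1 (by simp)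
          · rw [hy'] at hZ
            rw [ZFword, List.Chain', List.isChain_cons] at hZ
            exact hZ.2
        · obtain ⟨hZ, hL, hH⟩ := (IH0 v).1 hv
          refine ⟨?_, by simp [hL], rfl⟩
          rw [ZF_cons_cons]
          refine ⟨rfl, ?_⟩
          rw [ZFword, List.Chain', List.isChain_cons]
          refine ⟨?_, hZ⟩
          intro z hz
          rintro ⟨h1, _⟩; exact absurd h1 (by simp)
      · rintro ⟨hZ, hL, hH⟩
        have hw := head_eq_true hH
        -- w = true :: w.tail, and w.tail = b :: rest with b = false
        cases htl : w.tail with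
        | nil => rw [hw, htl] at hL; simp at hL
        | cons b rest =>
          rw [hw, htl] at hZ hL ⊢
          rw [ZF_cons_cons] at hZ
          obtain ⟨rfl, hZ'⟩ := hZ
          have hrest : ZFword rest := by
            rw [ZFword, List.Chain', List.isChain_cons] at hZ'
            exact hZ'.2
          have hrestL : rest.length = n := by simp at hL; omega
          by_cases hrh : rest.head? = some true
          · right
            exact ⟨rest, (IH0 rest).2 ⟨hrest, hrestL, hrh⟩, rfl⟩
          · left
            refine ⟨rest, ?_, rfl⟩
            refine ⟨true :: rest, (IH1 _).2 ⟨?_, by simp [hrestL], rfl⟩, rfl⟩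
            rw [ZFword, List.Chain', List.isChain_cons]
            refine ⟨?_, hrest⟩
            intro z hz
            rintro ⟨_, h2⟩
            cases z
            · simp at h2
            · exact hrh (by cases rest with
                | nil => simp at hz
                | cons c t => simp at hz; rw [← hz]; rfl)

lemma length_Nlist : ∀ n, (Nlist n).length = Nat.fib n
  | 0 => rfl
  | 1 => rfl
  | (n + 2) => by
      simp only [Nlist, List.length_append, List.length_map, List.length_reverse,
        length_Nlist (n + 1), length_Nlist n, Nat.fib_add_two]
      omega

lemma Nlist_ne_nil {n : ℕ} (h : 1 ≤ n) : Nlist n ≠ [] := by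
  intro hc
  have h1 := length_Nlist n
  rw [hc] at h1
  have h2 : 0 < Nat.fib n := Nat.fib_pos.2 h
  simp at h1
  omega

lemma head?_Nlist (n : ℕ) {w : List Bool} (h : (Nlist (n + 1)).getLast? = some w) :
    (Nlist (n + 2)).head? = some (true :: false :: w.tail) := by
  have hne : Nlist (n + 1) ≠ [] := by
    intro hc; rw [hc] at h; simp at h
  have hne2 : ((Nlist (n + 1)).map List.tail).reverse.map
      (fun w => true :: false :: w) ≠ [] := by
    simp [hne]
  rw [show Nlist (n + 2) = ((Nlist (n + 1)).map List.tail).reverse.map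
      (fun w => true :: false :: w) ++ (Nlist n).reverse.map (fun w => true :: false :: w)
    from rfl, List.head?_append_of_ne_nil _ hne2, List.head?_map, List.head?_reverse,
    List.getLast?_map, h]
  rfl

lemma getLast?_Nlist (n : ℕ) {w : List Bool} (h : (Nlist n).head? = some w) :
    (Nlist (n + 2)).getLast? = some (true :: false :: w) := by
  have hne : Nlist n ≠ [] := by
    intro hc; rw [hc] at h; simp at h
  have hne2 : (Nlist n).reverse.map (fun w => true :: false :: w) ≠ [] := by simp [hne]
  rw [show Nlist (n + 2) = ((Nlist (n + 1)).map List.tail).reverse.map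
      (fun w => true :: false :: w) ++ (Nlist n).reverse.map (fun w => true :: false :: w)
    from rfl, List.getLast?_append_of_ne_nil _ hne2, List.getLast?_map,
    List.getLast?_reverse, h]
  rfl

lemma cons2_injective : Function.Injective (fun w : List Bool => true :: false :: w) := by
  intro a b h; simpa using h

lemma nodup_Nlist : ∀ n, (Nlist n).Nodup := by
  intro n
  induction n using Nat.strong_induction_on with
  | _ n IH =>
    match n with
    | 0 => simp [Nlist]
    | 1 => simp [Nlist]
    | (n + 2) =>
      have IH1 := IH (n + 1) (by omega)
      have IH0 := IH n (by omega)
      refine List.Nodup.append ?_ ?_ ?_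
      · apply List.Nodup.map cons2_injective
        rw [List.nodup_reverse]
        apply List.Nodup.map_on ?_ IH1
        intro x hx y hy hxy
        have hxh := ((mem_Nlist _ x).1 hx).2.2
        have hyh := ((mem_Nlist _ y).1 hy).2.2
        rw [head_eq_true hxh, head_eq_true hyh, hxy]
      · apply List.Nodup.map cons2_injective
        rw [List.nodup_reverse]
        exact IH0
      · -- disjoint
        intro a ha hb
        simp only [List.mem_map, List.mem_reverse] at ha hb
        obtain ⟨x, hx, rfl⟩ := ha
        obtain ⟨v, hv, hfv⟩ := hb
        obtain ⟨y, hy, rfl⟩ := hx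
        have hvh := ((mem_Nlist _ v).1 hv).2.2
        have heq : v = y.tail := by simpa using hfv
        rw [heq] at hvh
        have hyZ := ((mem_Nlist _ y).1 hy).1
        have hyh := ((mem_Nlist _ y).1 hy).2.2
        rw [head_eq_true hyh] at hyZ
        cases htl : y.tail with
        | nil => rw [htl] at hvh; simp at hvh
        | cons b r =>
          rw [htl] at hyZ hvh
          rw [ZF_cons_cons] at hyZ
          rw [hyZ.1] at hvh
          simp at hvh

/-- The first `m` blocks, flattened. -/
def Lk (m : ℕ) : List (List Bool) := ((List.range m).map Nlist).flatten

lemma Lk_succ (m : ℕ) : Lk (m + 1) = Lk m ++ Nlist m := by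
  simp [Lk, List.range_succ]

lemma mem_Lk (m : ℕ) (w : List Bool) :
    w ∈ Lk m ↔ ZFword w ∧ w.length < m ∧ w.head? = some true := by
  simp only [Lk, List.mem_flatten, List.mem_map]
  constructor
  · rintro ⟨l, ⟨j, hj, rfl⟩, hw⟩
    rw [List.mem_range] at hj
    obtain ⟨h1, h2, h3⟩ := (mem_Nlist j w).1 hw
    exact ⟨h1, by omega, h3⟩
  · rintro ⟨h1, h2, h3⟩
    exact ⟨Nlist w.length, ⟨w.length, by rw [List.mem_range]; omega, rfl⟩,
      (mem_Nlist _ w).2 ⟨h1, rfl, h3⟩⟩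

lemma length_Lk (m : ℕ) : (Lk m).length = Nat.fib (m + 1) - 1 := by
  induction m with
  | zero => rfl
  | succ m ih =>
    rw [Lk_succ, List.length_append, ih, length_Nlist]
    simp only [show m + 1 + 1 = m + 2 from rfl]
    have h1 : 0 < Nat.fib (m + 1) := Nat.fib_pos.2 (by omega)
    have h2 : Nat.fib (m + 2) = Nat.fib m + Nat.fib (m + 1) := Nat.fib_add_two
    omega

lemma nodup_Lk (m : ℕ) : (Lk m).Nodup := by
  induction m with
  | zero => simp [Lk]
  | succ m ih =>
    rw [Lk_succ]
    refine List.Nodup.append ih (nodup_Nlist m) ?_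
    intro a ha hb
    have h1 := ((mem_Lk m a).1 ha).2.1
    have h2 := ((mem_Nlist m a).1 hb).2.1
    omega

lemma getD_Lk_stable (k : ℕ) : ∀ m, k + 1 ≤ m → ∀ i, i < (Lk (k + 1)).length →
    (Lk m).getD i [] = (Lk (k + 1)).getD i [] := by
  intro m
  induction m with
  | zero => omega
  | succ m ih =>
    intro hm i hi
    rcases Nat.eq_or_lt_of_le hm with h | h
    · rw [h]
    · have hm' : k + 1 ≤ m := by omega
      rw [Lk_succ, List.getD_append]
      · exact ih hm' i hi
      · calc i < (Lk (k + 1)).length := hi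
          _ ≤ (Lk m).length := by
            rw [length_Lk, length_Lk]
            simp only [show k + 1 + 1 = k + 2 from rfl]
            have := Nat.fib_mono (show k + 2 ≤ m + 1 by omega)
            omega

lemma le_fib_succ : ∀ k : ℕ, k ≤ Nat.fib (k + 1) := by
  intro k
  induction k using Nat.strong_induction_on with
  | _ k IH =>
    match k with
    | 0 => simp
    | 1 => simp
    | (k + 2) =>
      have h1 := IH (k + 1) (by omega)
      have h2 : 0 < Nat.fib (k + 2) := Nat.fib_pos.2 (by omega)
      have h3 : Nat.fib (k + 3) = Nat.fib (k + 1) + Nat.fib (k + 2) := Nat.fib_add_two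
      have h4 : Nat.fib (k + 1) ≤ Nat.fib (k + 2) := Nat.fib_mono (by omega)
      have h5 : 0 < Nat.fib (k + 1) := Nat.fib_pos.2 (by omega)
      simp only [show k + 2 + 1 = k + 3 from rfl] at *
      simp only [show k + 1 + 1 = k + 2 from rfl] at *
      omega

lemma Gword_eq {k n : ℕ} (hk : 1 ≤ k) (h1 : Nat.fib (k + 1) ≤ n) (h2 : n < Nat.fib (k + 2)) :
    Gword n = (Nlist k).getD (n - Nat.fib (k + 1)) [] := by
  have hn1 : 1 ≤ n := le_trans (Nat.fib_pos.2 (by omega)) h1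
  have hkn : k + 1 ≤ n + 2 := by
    have := le_fib_succ k
    omega
  have hGw : Gword n = (Lk (n + 2)).getD (n - 1) [] := rfl
  have hi : n - 1 < (Lk (k + 1)).length := by
    rw [length_Lk]
    simp only [show k + 1 + 1 = k + 2 from rfl]
    omega
  rw [hGw, getD_Lk_stable k (n + 2) hkn (n - 1) hi, Lk_succ, List.getD_append_right]
  · rw [length_Lk]
    congr 1
    have := Nat.fib_pos.2 (show 0 < k + 1 by omega)
    omega
  · rw [length_Lk]
    omega

lemma mem_of_getLast?' {α : Type*} {l : List α} {x : α} (h : l.getLast? = some x) : x ∈ l := by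
  obtain ⟨h1, rfl⟩ := List.mem_getLast?_eq_getLast (show x ∈ l.getLast? by rw [h]; rfl)
  exact List.getLast_mem h1

lemma getD_of_getLast? {α : Type*} {l : List α} {x : α} (d : α) (h : l.getLast? = some x) :
    l.getD (l.length - 1) d = x := by
  have hne : l ≠ [] := by intro hc; rw [hc] at h; simp at h
  have hlen : 0 < l.length := List.length_pos_iff.2 hne
  rw [List.getD_eq_getElem _ _ (by omega)]
  rw [List.getLast?_eq_getElem?, List.getElem?_eq_getElem (by omega)] at h
  exact Option.some_inj.1 h

lemma getD_of_head? {α : Type*} {l : List α} {x : α} (d : α) (h : l.head? = some x) :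
    l.getD 0 d = x := by
  cases l with
  | nil => simp at h
  | cons a l => simp at h; simp [h]

lemma chain'_imp_mem {α : Type*} {R S : α → α → Prop} {Q : α → Prop} :
    ∀ {l : List α}, (∀ x ∈ l, Q x) → (∀ a b, Q a → Q b → R a b → S a b) →
      l.Chain' R → l.Chain' S := by
  intro l
  induction l with
  | nil => intro _ _ _; exact List.isChain_nil
  | cons a l ih =>
    intro hQ h hc
    rw [List.Chain', List.isChain_cons] at hc ⊢
    refine ⟨?_, ih (fun x hx => hQ x (List.mem_cons_of_mem _ hx)) h hc.2⟩
    intro y hy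
    exact h a y (hQ a List.mem_cons_self)
      (hQ y (List.mem_cons_of_mem _ (List.mem_of_mem_head? hy))) (hc.1 y hy)

lemma ham1_cons (a : Bool) {x y : List Bool} (h : x.length = y.length) :
    hammingWords (a :: x) (a :: y) = hammingWords x y := by
  rw [hammingWords_cons_cons h, if_pos rfl, zero_add]

lemma gray_chain : ∀ n, (Nlist n).Chain' (fun a b => hammingWords a b = 1) := by
  intro n
  induction n using Nat.strong_induction_on with
  | _ n IH =>
    match n with
    | 0 => exact List.isChain_nil
    | 1 => exact List.isChain_singleton _
    | (n + 2) =>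
      have IH1 := IH (n + 1) (by omega)
      have IH0 := IH n (by omega)
      refine List.IsChain.append ?_ ?_ ?_
      · rw [List.isChain_map, List.isChain_reverse, List.isChain_map]
        refine chain'_imp_mem (Q := fun y => y ∈ Nlist (n + 1)) (fun x hx => hx) ?_ IH1
        intro a b ha hb hab
        obtain ⟨_, haL, haH⟩ := (mem_Nlist _ a).1 ha
        obtain ⟨_, hbL, hbH⟩ := (mem_Nlist _ b).1 hb
        have htL : a.tail.length = b.tail.length := by
          rw [List.length_tail, List.length_tail, haL, hbL]
        show hammingWords (true :: false :: b.tail) (true :: false :: a.tail) = 1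
        rw [ham1_cons _ (by simpa using htL.symm), ham1_cons _ htL.symm]
        have : hammingWords a b = hammingWords a.tail b.tail := by
          conv_lhs => rw [head_eq_true haH, head_eq_true hbH]
          exact ham1_cons _ (by rw [List.length_tail, List.length_tail, haL, hbL])
        rw [hammingWords_comm]
        rw [this] at hab
        exact hab
      · rw [List.isChain_map, List.isChain_reverse]
        refine chain'_imp_mem (Q := fun y => y ∈ Nlist n) (fun x hx => hx) ?_ IH0
        intro a b ha hb hab
        obtain ⟨_, haL, _⟩ := (mem_Nlist _ a).1 ha
        obtain ⟨_, hbL, _⟩ := (mem_Nlist _ b).1 hb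
        show hammingWords (true :: false :: b) (true :: false :: a) = 1
        rw [ham1_cons _ (by simp [haL, hbL]), ham1_cons _ (by rw [haL, hbL])]
        rw [hammingWords_comm]
        exact hab
      · intro x hx y hy
        have hN0 : Nlist n ≠ [] := by
          intro hc
          rw [hc] at hy
          simp at hy
        obtain ⟨m, rfl⟩ : ∃ m, n = m + 1 := by
          cases n with
          | zero => exact absurd rfl hN0
          | succ m => exact ⟨m, rfl⟩
        obtain ⟨w0, hw0⟩ : ∃ w0, (Nlist (m + 1)).getLast? = some w0 := by
          cases e : (Nlist (m + 1)).getLast? with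
          | none => exact absurd (List.getLast?_eq_none_iff.1 e) hN0
          | some w0 => exact ⟨w0, rfl⟩
        have hw0m : w0 ∈ Nlist (m + 1) := mem_of_getLast?' hw0
        have hw0H := ((mem_Nlist _ w0).1 hw0m).2.2
        have hhd := head?_Nlist m hw0
        rw [List.getLast?_map, List.getLast?_reverse, List.head?_map,
          show m + 1 + 1 = m + 2 from rfl, hhd] at hx
        rw [List.head?_map, List.head?_reverse, hw0] at hy
        simp only [Option.map_some, Option.mem_def, Option.some.injEq] at hx hy
        subst hx
        subst hy
        obtain ⟨t, rfl⟩ : ∃ t, w0 = true :: t := ⟨w0.tail, head_eq_true hw0H⟩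
        show hammingWords (true :: false :: (true :: false :: (true :: t).tail).tail)
          (true :: false :: (true :: t)) = 1
        simp only [List.tail_cons]
        rw [ham1_cons _ (by simp), ham1_cons _ (by simp),
          hammingWords_cons_cons rfl, hammingWords_self]
        simp

lemma ham_le_two_aux (t : List Bool) (a b c : Bool) :
    hammingWords (a :: t) (b :: c :: t) ≤ 2 := by
  rw [hammingWords_eq_card (le_refl _)]
  calc _ ≤ ({t.length, t.length + 1} : Finset ℕ).card := by
        apply Finset.card_le_card
        intro i hi
        simp only [Finset.mem_filter, Finset.mem_range] at hi
        simp only [Finset.mem_insert, Finset.mem_singleton]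
        by_contra hc
        push_neg at hc
        rcases lt_or_ge i t.length with h | h
        · have e1 : bit (a :: t) i = bit t i := by rw [bit_cons, if_neg h.ne]
          have e2 : bit (b :: c :: t) i = bit t i := by
            rw [bit_cons, if_neg (by simp; omega), bit_cons, if_neg h.ne]
          exact hi.2 (e1.trans e2.symm)
        · have : i < max (a :: t).length (b :: c :: t).length := hi.1
          simp at this
          omega
    _ ≤ 2 := by
      apply le_trans (Finset.card_insert_le _ _)
      simp

lemma exists_block (n : ℕ) (hn : 1 ≤ n) :
    ∃ k, 1 ≤ k ∧ Nat.fib (k + 1) ≤ n ∧ n < Nat.fib (k + 2) := by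
  induction n with
  | zero => omega
  | succ n ih =>
    rcases Nat.eq_or_lt_of_le hn with h | h
    · exact ⟨1, by omega, by simp [← h], by rw [← h]; decide⟩
    · obtain ⟨k, hk1, hk2, hk3⟩ := ih (by omega)
      rcases Nat.lt_or_ge (n + 1) (Nat.fib (k + 2)) with h2 | h2
      · exact ⟨k, hk1, by omega, h2⟩
      · refine ⟨k + 1, by omega, by simpa [show k + 1 + 1 = k + 2 from rfl] using h2, ?_⟩
        have he : n + 1 = Nat.fib (k + 2) := by omega
        rw [he, show k + 1 + 2 = k + 3 from rfl]
        exact Nat.fib_lt_fib_succ (by omega)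

lemma ham_G_inblock {k n : ℕ} (hk : 1 ≤ k) (h1 : Nat.fib (k + 1) ≤ n)
    (h2 : n + 1 < Nat.fib (k + 2)) :
    hammingWords (Gword n) (Gword (n + 1)) = 1 := by
  rw [Gword_eq hk h1 (by omega), Gword_eq hk (by omega) h2]
  have hi : n + 1 - Nat.fib (k + 1) = (n - Nat.fib (k + 1)) + 1 := by omega
  rw [hi]
  have hlen : (Nlist k).length = Nat.fib k := length_Nlist k
  have hilt : (n - Nat.fib (k + 1)) + 1 < Nat.fib k := by
    have : Nat.fib (k + 2) = Nat.fib k + Nat.fib (k + 1) := Nat.fib_add_two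
    omega
  rw [List.getD_eq_getElem _ _ (by omega), List.getD_eq_getElem _ _ (by omega)]
  have h := (List.isChain_iff_getElem.1 (gray_chain k)) (n - Nat.fib (k + 1)) (by omega)
  simpa [List.get_eq_getElem] using h

lemma ham_G_boundary {k : ℕ} (hk : 1 ≤ k) :
    hammingWords (Gword (Nat.fib (k + 2) - 1)) (Gword (Nat.fib (k + 2))) ≤ 2 := by
  have hlt : Nat.fib (k + 1) < Nat.fib (k + 2) := Nat.fib_lt_fib_succ (by omega)
  have hpos1 : 0 < Nat.fib (k + 1) := Nat.fib_pos.2 (by omega)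
  have hposk : 0 < Nat.fib k := Nat.fib_pos.2 (by omega)
  have hadd : Nat.fib (k + 2) = Nat.fib k + Nat.fib (k + 1) := Nat.fib_add_two
  have hG1 : Gword (Nat.fib (k + 2) - 1) = (Nlist k).getD (Nat.fib k - 1) [] := by
    rw [Gword_eq hk (by omega) (by omega)]
    congr 1
    omega
  have hG2 : Gword (Nat.fib (k + 2)) = (Nlist (k + 1)).getD 0 [] := by
    rw [Gword_eq (show 1 ≤ k + 1 by omega) (by rw [show k + 1 + 1 = k + 2 from rfl])
      (by rw [show k + 1 + 2 = k + 3 from rfl]; exact Nat.fib_lt_fib_succ (by omega))]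
    congr 1
    simp [show k + 1 + 1 = k + 2 from rfl]
  obtain ⟨w0, hw0⟩ : ∃ w0, (Nlist k).getLast? = some w0 := by
    cases e : (Nlist k).getLast? with
    | none => exact absurd (List.getLast?_eq_none_iff.1 e) (Nlist_ne_nil hk)
    | some w0 => exact ⟨w0, rfl⟩
  have hw0m : w0 ∈ Nlist k := mem_of_getLast?' hw0
  have hw0H := ((mem_Nlist _ w0).1 hw0m).2.2
  obtain ⟨j, rfl⟩ : ∃ j, k = j + 1 := ⟨k - 1, by omega⟩
  have hhd := head?_Nlist j hw0
  have hG1' : Gword (Nat.fib (j + 1 + 2) - 1) = w0 := by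
    rw [hG1]
    have hlen : Nat.fib (j + 1) - 1 = (Nlist (j + 1)).length - 1 := by rw [length_Nlist]
    rw [hlen]
    exact getD_of_getLast? _ hw0
  have hG2' : Gword (Nat.fib (j + 1 + 2)) = true :: false :: w0.tail := by
    rw [hG2]
    exact getD_of_head? _ (by rw [show j + 1 + 1 = j + 2 from rfl]; exact hhd)
  rw [hG1', hG2', head_eq_true hw0H]
  exact ham_le_two_aux _ _ _ _


noncomputable def Wfin (k : ℕ) : Finset (List Bool) := (Lk (k + 1)).toFinset

lemma mem_Wfin {k : ℕ} {w : List Bool} :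
    w ∈ Wfin k ↔ ZFword w ∧ w.length ≤ k ∧ w.head? = some true := by
  rw [Wfin, List.mem_toFinset, mem_Lk]
  constructor
  · rintro ⟨h1, h2, h3⟩; exact ⟨h1, by omega, h3⟩
  · rintro ⟨h1, h2, h3⟩; exact ⟨h1, by omega, h3⟩

lemma card_Wfin (k : ℕ) : (Wfin k).card = Nat.fib (k + 2) - 1 := by
  rw [Wfin, List.toFinset_card_of_nodup (nodup_Lk _), length_Lk]

lemma head?_dropWhile_false {l : List Bool} (h : l.dropWhile (fun b => !b) ≠ []) :
    (l.dropWhile (fun b => !b)).head? = some true := by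
  induction l with
  | nil => simp at h
  | cons a t ih =>
    cases a
    · rw [List.dropWhile_cons_of_pos (by simp)] at h ⊢
      exact ih h
    · rw [List.dropWhile_cons_of_neg (by simp)]
      rfl

lemma bit_top {w : List Bool} (h : w.head? = some true) : bit w (w.length - 1) = true := by
  obtain ⟨t, rfl⟩ : ∃ t, w = true :: t := ⟨w.tail, head_eq_true h⟩
  rw [show (true :: t).length - 1 = t.length by simp, bit_cons, if_pos rfl]

lemma exists_bit_ne {a b : List Bool} (ha : a.head? = some true) (hb : b.head? = some true)
    (hne : a ≠ b) : ∃ i, bit a i ≠ bit b i := by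
  have hal : 1 ≤ a.length := by
    cases a
    · simp at ha
    · simp
  have hbl : 1 ≤ b.length := by
    cases b
    · simp at hb
    · simp
  rcases lt_trichotomy a.length b.length with h | h | h
  · refine ⟨b.length - 1, ?_⟩
    rw [bit_top hb, bit_of_le (by omega)]
    simp
  · by_contra hc
    push_neg at hc
    exact hne (eq_of_bit_eq h (fun i _ => hc i))
  · refine ⟨a.length - 1, ?_⟩
    rw [bit_top ha, bit_of_le (by omega)]
    simp


end GrayAux

section
open GrayAux

/-- Let `(u_n)_{n ≥ 1}` be any sequence listing every nonzero ZF-word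
exactly once (up to leading `0`s, stripped by `List.dropWhile (!·)`) which is
length-increasing (the length after stripping leading `0`s is nondecreasing).  Then for
every `n ≥ 1`, `h(u_n, u_{n+1}) ≥ h(g_n, g_{n+1})`. -/
theorem grayCode_hamming_minimal (u : ℕ → List Bool)
    (hZF : ∀ n, 1 ≤ n → ZFword (u n) ∧ true ∈ u n)
    (huniq : ∀ w : List Bool, ZFword w → w.head? = some true →
      ∃! n : ℕ, 1 ≤ n ∧ (u n).dropWhile (fun b => !b) = w)
    (hmono : ∀ n, 1 ≤ n →
      ((u n).dropWhile (fun b => !b)).length ≤ ((u (n + 1)).dropWhile (fun b => !b)).length)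
    (n : ℕ) (hn : 1 ≤ n) :
    hammingWords (Gword n) (Gword (n + 1)) ≤ hammingWords (u n) (u (n + 1)) := by
  classical
  set s : ℕ → List Bool := fun m => (u m).dropWhile (fun b => !b) with hs
  have hsZF : ∀ m, 1 ≤ m → ZFword (s m) := fun m hm =>
    List.IsChain.suffix ((hZF m hm).1) (List.dropWhile_suffix _)
  have hsne : ∀ m, 1 ≤ m → s m ≠ [] := by
    intro m hm hc
    have := List.dropWhile_eq_nil_iff.1 hc true (hZF m hm).2
    simp at this
  have hshead : ∀ m, 1 ≤ m → (s m).head? = some true := fun m hm =>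
    head?_dropWhile_false (hsne m hm)
  have hbitu : ∀ m i, bit (u m) i = bit (s m) i := fun m i => (bit_dropWhile (u m) i).symm
  have hmono' : ∀ a b, 1 ≤ a → a ≤ b → (s a).length ≤ (s b).length := by
    intro a b ha hab
    induction b with
    | zero => omega
    | succ b ih =>
      rcases Nat.eq_or_lt_of_le hab with h | h
      · rw [h]
      · exact le_trans (ih (by omega)) (hmono b (by omega))
  have hinj : ∀ a b, 1 ≤ a → 1 ≤ b → s a = s b → a = b := by
    intro a b ha hb he
    obtain ⟨n₀, _, huni⟩ := huniq (s a) (hsZF a ha) (hshead a ha)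
    have h1 : a = n₀ := huni a ⟨ha, rfl⟩
    have h2 : b = n₀ := huni b ⟨hb, he.symm⟩
    rw [h1, h2]
  -- Claim A
  have hA : ∀ k m, 1 ≤ m → (s m).length ≤ k → m ≤ Nat.fib (k + 2) - 1 := by
    intro k m hm hlen
    have hcard : m = (Finset.Icc 1 m).card := by rw [Nat.card_Icc]; omega
    rw [hcard, ← card_Wfin k]
    apply Finset.card_le_card_of_injOn s
    · intro a ha
      rw [Finset.mem_coe, Finset.mem_Icc] at ha
      rw [Finset.mem_coe, mem_Wfin]
      exact ⟨hsZF a ha.1, le_trans (hmono' a m ha.1 ha.2) hlen, hshead a ha.1⟩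
    · intro a ha b hb he
      rw [Finset.mem_coe, Finset.mem_Icc] at ha hb
      exact hinj a b ha.1 hb.1 he
  -- Claim C
  have hC : ∀ k m, 1 ≤ m → m ≤ Nat.fib (k + 2) - 1 → (s m).length ≤ k := by
    intro k m hm hle
    by_contra hc
    push_neg at hc
    set f : List Bool → ℕ := fun w =>
      if h : ZFword w ∧ w.head? = some true then (huniq w h.1 h.2).exists.choose else 0
      with hf
    have hfspec : ∀ w, ZFword w → w.head? = some true → 1 ≤ f w ∧ s (f w) = w := by
      intro w h1 h2
      rw [hf]
      simp only [dif_pos (And.intro h1 h2)]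
      exact (huniq w h1 h2).exists.choose_spec
    have hcard : (Wfin k).card ≤ (Finset.Icc 1 (m - 1)).card := by
      apply Finset.card_le_card_of_injOn f
      · intro w hw
        rw [Finset.mem_coe, mem_Wfin] at hw
        obtain ⟨hfw1, hfw2⟩ := hfspec w hw.1 hw.2.2
        rw [Finset.mem_coe, Finset.mem_Icc]
        refine ⟨hfw1, ?_⟩
        by_contra hfc
        push_neg at hfc
        have hge : m ≤ f w := by omega
        have := hmono' m (f w) hm hge
        rw [hfw2] at this
        omega
      · intro w hw w' hw' he
        rw [Finset.mem_coe, mem_Wfin] at hw hw'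
        have h1 := (hfspec w hw.1 hw.2.2).2
        have h2 := (hfspec w' hw'.1 hw'.2.2).2
        rw [he] at h1
        rw [← h1, h2]
    rw [card_Wfin, Nat.card_Icc] at hcard
    have hpos : 0 < Nat.fib (k + 2) := Nat.fib_pos.2 (by omega)
    omega
  -- length of s m in block k
  have hlen_block : ∀ k m, 1 ≤ k → Nat.fib (k + 1) ≤ m → m < Nat.fib (k + 2) →
      (s m).length = k := by
    intro k m hk h1 h2
    have hm1 : 1 ≤ m := le_trans (Nat.fib_pos.2 (by omega)) h1
    have hle : (s m).length ≤ k := hC k m hm1 (by omega)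
    have hge : k ≤ (s m).length := by
      by_contra hc
      push_neg at hc
      obtain ⟨j, rfl⟩ : ∃ j, k = j + 1 := ⟨k - 1, by omega⟩
      have := hA j m hm1 (by omega)
      have hpos : 0 < Nat.fib (j + 2) := Nat.fib_pos.2 (by omega)
      simp only [show j + 1 + 1 = j + 2 from rfl] at h1
      omega
    omega
  -- main case split
  obtain ⟨k, hk1, hk2, hk3⟩ := exists_block n hn
  rcases Nat.lt_or_ge (n + 1) (Nat.fib (k + 2)) with hcase | hcase
  · -- in-block: Gray distance is 1
    rw [ham_G_inblock hk1 hk2 hcase]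
    have hne : s n ≠ s (n + 1) := by
      intro he
      have := hinj n (n + 1) hn (by omega) he
      omega
    obtain ⟨i, hi⟩ := exists_bit_ne (hshead n hn) (hshead (n + 1) (by omega)) hne
    apply one_le_hammingWords (i := i)
    rw [hbitu n i, hbitu (n + 1) i]
    exact hi
  · -- boundary
    have hb : n + 1 = Nat.fib (k + 2) := by omega
    have hfpos : 0 < Nat.fib (k + 2) := Nat.fib_pos.2 (by omega)
    have hGle : hammingWords (Gword n) (Gword (n + 1)) ≤ 2 := by
      rw [show n = Nat.fib (k + 2) - 1 from by omega,
        show Nat.fib (k + 2) - 1 + 1 = Nat.fib (k + 2) from by omega]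
      exact ham_G_boundary hk1
    have hl1 : (s n).length = k := hlen_block k n hk1 hk2 hk3
    have hl2 : (s (n + 1)).length = k + 1 := by
      apply hlen_block (k + 1) (n + 1) (by omega)
      · rw [show k + 1 + 1 = k + 2 from rfl]; omega
      · rw [show k + 1 + 2 = k + 3 from rfl, hb]
        exact Nat.fib_lt_fib_succ (by omega)
    have hdiffk : bit (s n) k ≠ bit (s (n + 1)) k := by
      have h1 : bit (s n) k = false := bit_of_le (by omega)
      have h2 : bit (s (n + 1)) k = true := by
        have := bit_top (hshead (n + 1) (by omega))
        rwa [hl2, show k + 1 - 1 = k from rfl] at this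
      rw [h1, h2]
      simp
    have hdiff2 : ∃ i, i ≠ k ∧ bit (s n) i ≠ bit (s (n + 1)) i := by
      by_contra hc
      push_neg at hc
      have heq : s (n + 1) = true :: s n := by
        apply eq_of_bit_eq (by rw [hl2]; simp [hl1])
        intro i hilt
        rw [hl2] at hilt
        rcases Nat.eq_or_lt_of_le (Nat.lt_succ_iff.1 hilt) with h | h
        · rw [h, bit_cons, if_pos hl1.symm]
          have := bit_top (hshead (n + 1) (by omega))
          rwa [hl2, show k + 1 - 1 = k from rfl] at this
        · rw [bit_cons, if_neg (by omega), (hc i (by omega)).symm]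
      have hZb := hsZF (n + 1) (by omega)
      rw [heq, head_eq_true (hshead n hn)] at hZb
      rw [ZF_cons_cons] at hZb
      exact absurd hZb.1 (by simp)
    obtain ⟨i, hik, hi⟩ := hdiff2
    refine le_trans hGle (two_le_hammingWords (i := i) (j := k) hik ?_ ?_)
    · rw [hbitu n i, hbitu (n + 1) i]; exact hi
    · rw [hbitu n k, hbitu (n + 1) k]; exact hdiffk

end
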